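/- Let Z ~ Poisson(μ) and G ~ Geom(1−q) be independent, and B = min(Z,G). Then the conditional distribution of B given the event {Z ≤ G} is Poisson with parameter qμ, i.e., P(B = z | Z ≤ G) = e^{−qμ}(qμ)^z / z! for all z ∈ ℕ. -/

import Mathlib

open MeasureTheory ProbabilityTheory

/-- For independent `Z ~ Poisson(μ)` and `G ~ Geom(1-q)`, the conditional
distribution of `B = min(Z, G)` given `{Z ≤ G}` is Poisson with parameter `q μ`. -/
theorem min_poisson_geometric_cond_poisson
    {Ω : Type*} [MeasurableSpace Ω] (P : Measure Ω) [IsProbabilityMeasure P]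
    (Z G : Ω → ℕ) (hZmeas : Measurable Z) (hGmeas : Measurable G)
    (m q : ℝ) (hm : 0 < m) (hq0 : 0 < q) (hq1 : q < 1)
    (hZ : ∀ k : ℕ, P {ω | Z ω = k} =
      ENNReal.ofReal (Real.exp (-m) * m ^ k / (Nat.factorial k)))
    (hG : ∀ k : ℕ, P {ω | G ω = k} = ENNReal.ofReal (q ^ k * (1 - q)))
    (hindep : IndepFun Z G P) :
    ∀ z : ℕ, (P[|{ω | Z ω ≤ G ω}]) {ω | min (Z ω) (G ω) = z} =
      ENNReal.ofReal (Real.exp (-(q * m)) * (q * m) ^ z / (Nat.factorial z)) := by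
  -- P(G ≥ z) = q^z
  have hGge : ∀ z : ℕ, P {ω | z ≤ G ω} = ENNReal.ofReal (q ^ z) := by
    intro z
    have hset : {ω | z ≤ G ω} = ⋃ k : ℕ, {ω | G ω = z + k} := by
      ext ω
      simp only [Set.mem_setOf_eq, Set.mem_iUnion]
      constructor
      · intro h; exact ⟨G ω - z, by omega⟩
      · rintro ⟨k, hk⟩; omega
    have hdisj : Pairwise (Function.onFun Disjoint fun k : ℕ => {ω | G ω = z + k}) := by
      intro i j hij
      simp only [Function.onFun, Set.disjoint_left]
      intro ω hi hj
      simp only [Set.mem_setOf_eq] at hi hj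
      omega
    have hmeas : ∀ k : ℕ, MeasurableSet {ω | G ω = z + k} := fun k =>
      hGmeas (measurableSet_singleton (z + k))
    rw [hset, measure_iUnion hdisj hmeas]
    simp_rw [hG]
    have hsum : HasSum (fun k : ℕ => q ^ (z + k) * (1 - q)) (q ^ z) := by
      have := (hasSum_geometric_of_lt_one hq0.le hq1).mul_left (q ^ z * (1 - q))
      have h2 : q ^ z * (1 - q) * (1 - q)⁻¹ = q ^ z := by
        rw [mul_assoc, mul_inv_cancel₀ (by linarith), mul_one]
      rw [h2] at this
      convert this using 2 with k
      · rfl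
      rw [pow_add]; ring
    rw [← hsum.tsum_eq, ENNReal.ofReal_tsum_of_nonneg]
    · intro k
      have h1q : (0:ℝ) < 1 - q := by linarith
      positivity
    · exact hsum.summable
  -- joint probability
  have hjoint : ∀ z : ℕ, P ({ω | Z ω = z} ∩ {ω | z ≤ G ω}) =
      ENNReal.ofReal (Real.exp (-m) * m ^ z / (Nat.factorial z) * q ^ z) := by
    intro z
    have : {ω | Z ω = z} = Z ⁻¹' {z} := rfl
    have h2 : {ω | z ≤ G ω} = G ⁻¹' (Set.Ici z) := rfl
    rw [this, h2,
      hindep.measure_inter_preimage_eq_mul _ _ (measurableSet_singleton z) measurableSet_Ici]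
    rw [← this, ← h2, hZ, hGge, ← ENNReal.ofReal_mul (by positivity)]
  -- P(Z ≤ G) = exp ((q-1) m)
  have hZG : P {ω | Z ω ≤ G ω} = ENNReal.ofReal (Real.exp ((q - 1) * m)) := by
    have hset : {ω | Z ω ≤ G ω} = ⋃ k : ℕ, ({ω | Z ω = k} ∩ {ω | k ≤ G ω}) := by
      ext ω
      simp only [Set.mem_setOf_eq, Set.mem_iUnion, Set.mem_inter_iff]
      constructor
      · intro h; exact ⟨Z ω, rfl, h⟩
      · rintro ⟨k, hk, hk'⟩; omega
    have hdisj : Pairwise (Function.onFun Disjoint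
        fun k : ℕ => {ω | Z ω = k} ∩ {ω | k ≤ G ω}) := by
      intro i j hij
      simp only [Function.onFun, Set.disjoint_left]
      rintro ω ⟨hi, _⟩ ⟨hj, _⟩
      simp only [Set.mem_setOf_eq] at hi hj
      omega
    have hmeas : ∀ k : ℕ, MeasurableSet ({ω | Z ω = k} ∩ {ω | k ≤ G ω}) := fun k =>
      (hZmeas (measurableSet_singleton k)).inter (hGmeas measurableSet_Ici)
    rw [hset, measure_iUnion hdisj hmeas]
    simp_rw [hjoint]
    have hsum : HasSum (fun k : ℕ => Real.exp (-m) * m ^ k / (Nat.factorial k) * q ^ k)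
        (Real.exp ((q - 1) * m)) := by
      have h1 : HasSum (fun k : ℕ => (q * m) ^ k / (Nat.factorial k)) (Real.exp (q * m)) := by
        rw [Real.exp_eq_exp_ℝ]
        exact NormedSpace.expSeries_div_hasSum_exp (q * m)
      have := h1.mul_left (Real.exp (-m))
      have heq : Real.exp (-m) * Real.exp (q * m) = Real.exp ((q - 1) * m) := by
        rw [← Real.exp_add]; ring_nf
      rw [heq] at this
      convert this using 2 with k
      · rfl
      rw [mul_pow]; ring
    rw [← hsum.tsum_eq, ENNReal.ofReal_tsum_of_nonneg]
    · intro k; positivity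
    · exact hsum.summable
  intro z
  have hmeasmin : MeasurableSet {ω | min (Z ω) (G ω) = z} :=
    (hZmeas.min hGmeas) (measurableSet_singleton z)
  rw [cond_apply (measurableSet_le hZmeas hGmeas)]
  have hset : {ω | Z ω ≤ G ω} ∩ {ω | min (Z ω) (G ω) = z} =
      {ω | Z ω = z} ∩ {ω | z ≤ G ω} := by
    ext ω
    simp only [Set.mem_inter_iff, Set.mem_setOf_eq]
    constructor
    · rintro ⟨h1, h2⟩
      rw [min_eq_left h1] at h2
      exact ⟨h2, h2 ▸ h1⟩
    · rintro ⟨h1, h2⟩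
      refine ⟨h1 ▸ h2, ?_⟩
      rw [min_eq_left (h1 ▸ h2), h1]
  rw [hset, hjoint, hZG]
  rw [← ENNReal.ofReal_inv_of_pos (Real.exp_pos _), ← ENNReal.ofReal_mul (by positivity)]
  congr 1
  rw [← Real.exp_neg, mul_pow]
  have key : Real.exp (-((q - 1) * m)) * Real.exp (-m) = Real.exp (-(q * m)) := by
    rw [← Real.exp_add]; congr 1; ring
  rw [← key]
  ring
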